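/- In a Banach algebra (or an algebra where the exponential series converge, e.g. for elements of a Weyl algebra represented suitably), suppose D, x, h satisfy [D,x] = h·1 with h a scalar. Then for all scalars s, a: exp(sD) * exp(ax) = exp(ax) * exp(sD) * exp(a*s*h). -/

import Mathlib

open NormedSpace Nat

private lemma pow_comm_aux {A : Type*} [NormedRing A] [NormedAlgebra ℂ A]
    (D x : A) (h : ℂ) (hDx : D * x - x * D = h • (1 : A)) :
    ∀ n : ℕ, D ^ (n + 1) * x = x * D ^ (n + 1) + (((n : ℂ) + 1) * h) • D ^ n := by
  have hbase : D * x = x * D + h • 1 := by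
    have := hDx; linear_combination (norm := noncomm_ring) this
  intro n
  induction n with
  | zero => simpa using hbase
  | succ n ih =>
    have hD : ∀ m : ℕ, D * D ^ m = D ^ (m + 1) := fun m => (pow_succ' D m).symm
    have : D ^ (n + 2) * x = D * (D ^ (n + 1) * x) := by
      rw [← mul_assoc, hD (n + 1)]
    rw [this, ih]
    rw [mul_add, mul_smul_comm, ← mul_assoc, hbase]
    push_cast
    rw [add_mul, smul_mul_assoc, one_mul]
    rw [mul_assoc x D (D ^ (n+1))]
    rw [hD (n + 1), hD n]
    rw [add_assoc, ← add_smul]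
    ring_nf

private lemma exp_mul_comm {A : Type*} [NormedRing A] [NormedAlgebra ℂ A] [CompleteSpace A]
    (D x : A) (h : ℂ) (hDx : D * x - x * D = h • (1 : A)) (s : ℂ) :
    exp (s • D) * x = x * exp (s • D) + (s * h) • exp (s • D) := by
  have hsum : Summable (fun n : ℕ => ((n ! : ℂ))⁻¹ • (s • D) ^ n) := expSeries_summable' (s • D)
  set g : ℕ → A := fun n => Nat.rec 0 (fun m _ => (s * h) • (((m ! : ℂ))⁻¹ • (s • D) ^ m)) n
    with hg
  have hg0 : g 0 = 0 := rfl
  have hgS : ∀ n, g (n + 1) = (s * h) • (((n ! : ℂ))⁻¹ • (s • D) ^ n) := fun n => rfl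
  have hgsum : Summable g := by
    rw [← summable_nat_add_iff 1]
    simp only [hgS]
    exact hsum.const_smul _
  have hterm : ∀ n : ℕ, (((n ! : ℂ))⁻¹ • (s • D) ^ n) * x
      = x * (((n ! : ℂ))⁻¹ • (s • D) ^ n) + g n := by
    intro n
    cases n with
    | zero => simp [hg0]
    | succ n =>
      rw [hgS]
      simp only [smul_pow, smul_mul_assoc]
      rw [pow_comm_aux D x h hDx n]
      simp only [smul_add, mul_smul_comm, smul_smul]
      congr 1
      congr 1
      have h1 : ((n + 1)! : ℂ) = ((n : ℂ) + 1) * (n ! : ℂ) := by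
        push_cast [Nat.factorial_succ]; ring
      have h2 : ((n : ℂ) + 1) ≠ 0 := Nat.cast_add_one_ne_zero n
      have h3 : ((n ! : ℂ)) ≠ 0 := Nat.cast_ne_zero.mpr n.factorial_ne_zero
      field_simp [h1]
      rw [h1]; ring
  calc exp (s • D) * x = ∑' n : ℕ, (((n ! : ℂ))⁻¹ • (s • D) ^ n) * x := by
        rw [exp_eq_tsum (𝕂 := ℂ)]; exact (hsum.tsum_mul_right x).symm
    _ = ∑' n : ℕ, (x * (((n ! : ℂ))⁻¹ • (s • D) ^ n) + g n) := by
        exact tsum_congr hterm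
    _ = (∑' n : ℕ, x * (((n ! : ℂ))⁻¹ • (s • D) ^ n)) + ∑' n : ℕ, g n := by
        exact Summable.tsum_add (hsum.mul_left x) hgsum
    _ = x * exp (s • D) + (s * h) • exp (s • D) := by
        congr 1
        · rw [exp_eq_tsum (𝕂 := ℂ)]; exact hsum.tsum_mul_left x
        · rw [Summable.tsum_eq_zero_add hgsum]
          simp only [hg0, hgS, zero_add]
          rw [Summable.tsum_const_smul _ hsum, exp_eq_tsum (𝕂 := ℂ)]

/-- Weyl relation: if `[D,x] = h•1` with `h` a scalar, then
`e^{sD} e^{ax} = e^{ash} e^{ax} e^{sD}`. -/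
theorem weyl_relation {A : Type*} [NormedRing A] [NormedAlgebra ℂ A] [CompleteSpace A]
    (D x : A) (h : ℂ) (hDx : D * x - x * D = h • (1 : A)) (s a : ℂ) :
    exp (s • D) * exp (a • x)
      = Complex.exp (a * s * h) • (exp (a • x) * exp (s • D)) := by
  let +nondep : NormedAlgebra ℚ A := .restrictScalars ℚ ℂ A
  obtain ⟨u, hu⟩ := isUnit_exp (s • D)
  have hkey := exp_mul_comm D x h hDx s
  have hconj : (u : A) * (a • x) * (↑u⁻¹ : A) = a • x + (a * s * h) • 1 := by
    have h1 : (u : A) * (a • x) = (a • x + (a * s * h) • 1) * (u : A) := by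
      rw [hu, mul_smul_comm, hkey]
      simp only [smul_add, add_mul, smul_mul_assoc, one_mul, smul_smul, mul_assoc]
    rw [h1, mul_assoc, u.mul_inv, mul_one]
  have := exp_units_conj u (a • x)
  rw [hconj] at this
  have hcomm : Commute (a • x) ((a * s * h) • (1 : A)) := by
    exact ((Commute.one_right (a • x)).smul_right _)
  rw [exp_add_of_commute hcomm] at this
  have hexp1 : exp ((a * s * h) • (1 : A)) = Complex.exp (a * s * h) • (1 : A) := by
    have : (a * s * h) • (1 : A) = algebraMap ℂ A (a * s * h) := by
      rw [Algebra.algebraMap_eq_smul_one]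
    rw [this, ← algebraMap_exp_comm, Algebra.algebraMap_eq_smul_one, Complex.exp_eq_exp_ℂ]
  rw [hexp1] at this
  -- this : exp (a•x) * (Complex.exp (a*s*h) • 1) = u * exp (a•x) * u⁻¹
  have h2 : (u : A) * exp (a • x) = Complex.exp (a * s * h) • (exp (a • x) * (u : A)) := by
    calc (u : A) * exp (a • x)
        = ((u : A) * exp (a • x) * (↑u⁻¹ : A)) * (u : A) := by
          rw [mul_assoc, u.inv_mul, mul_one]
      _ = (exp (a • x) * (Complex.exp (a * s * h) • (1 : A))) * (u : A) := by rw [this]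
      _ = Complex.exp (a * s * h) • (exp (a • x) * (u : A)) := by
          rw [mul_smul_comm, mul_one, smul_mul_assoc]
  rw [← hu]; exact h2
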